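/- Duhamel-type differential inequality (Lemma 4.1.3): Let M(s) be the generator of the cooperative linear system above and K(t,s) its order-preserving fundamental solution satisfying ‖K(t,s)b‖_∞ ≤ ‖b‖_∞. Suppose z: [0,T] → ℝ^{2(N+1)} is C¹ and satisfies the componentwise differential inequality -ż(s) ≤ M(s)z(s) + f(z(s)) for all s ∈ [t,T], where f(z(s)) ∈ ℝ^{2(N+1)}. Then z(t) ≤ ‖z(T)‖_∞ + ∫_t^T ‖f(z(s))‖_∞ ds (componentwise), using d/ds K(t,s) = K(t,s)M(s). -/

import Mathlib

open Set Matrix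

/-- Duhamel-type differential inequality (Lemma 4.1.3): if
`-ż(s) ≤ M(s)z(s) + f(z(s))` componentwise, with `K(t,s)` the order-preserving,
sup-norm-contracting fundamental solution satisfying `d/ds K(t,s) = K(t,s)M(s)`,
then `z(t) ≤ ‖z(T)‖_∞ + ∫_t^T ‖f(z(s))‖_∞ ds` componentwise. -/
theorem duhamel_differential_inequality
    {ι : Type*} [Fintype ι] [DecidableEq ι] [Nonempty ι]
    (T t : ℝ) (htT : t ≤ T)
    (M : ℝ → Matrix ι ι ℝ) (K : ℝ → ℝ → Matrix ι ι ℝ)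
    (hKflow : ∀ r s w : ℝ, K r s * K s w = K r w) (hKid : ∀ s, K s s = 1)
    (hKord : ∀ r s : ℝ, r ≤ s → ∀ p q : ι → ℝ, p ≤ q → K r s *ᵥ p ≤ K r s *ᵥ q)
    (hKcontr : ∀ r s : ℝ, r ≤ s → ∀ (b : ι → ℝ) (c : ℝ),
      (∀ x, |b x| ≤ c) → ∀ x, |(K r s *ᵥ b) x| ≤ c)
    (hKode : ∀ s ∈ Icc t T, ∀ p q : ι,
      HasDerivAt (fun r => K t r p q) ((K t s * M s) p q) s)
    (z z' F : ℝ → ι → ℝ)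
    (hz : ∀ s ∈ Icc t T, ∀ x, HasDerivAt (fun r => z r x) (z' s x) s)
    (hineq : ∀ s ∈ Icc t T, -z' s ≤ M s *ᵥ z s + F s)
    (ZT : ℝ) (hZT : ∀ x, |z T x| ≤ ZT)
    (φ : ℝ → ℝ) (hφcont : ContinuousOn φ (Icc t T))
    (hφ : ∀ s ∈ Icc t T, ∀ x, |F s x| ≤ φ s) :
    ∀ x, z t x ≤ ZT + ∫ s in t..T, φ s := by
  intro x
  -- the function g s = (K t s *ᵥ z s) x
  set g : ℝ → ℝ := fun s => ∑ q, K t s x q * z s q with hg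
  set g' : ℝ → ℝ := fun s => ∑ q, ((K t s * M s) x q * z s q + K t s x q * z' s q) with hg'
  have hgderiv : ∀ s ∈ Icc t T, HasDerivAt g (g' s) s := by
    intro s hs
    exact HasDerivAt.fun_sum fun q _ => (hKode s hs x q).mul (hz s hs q)
  -- lower bound on g'
  have hg'lb : ∀ s ∈ Icc t T, -φ s ≤ g' s := by
    intro s hs
    have h1 : g' s = ((K t s * M s) *ᵥ z s) x + (K t s *ᵥ z' s) x := by
      simp [hg', Matrix.mulVec, dotProduct, Finset.sum_add_distrib]
    have hle : -(M s *ᵥ z s + F s) ≤ z' s := by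
      have := hineq s hs
      intro q
      have := this q
      simp only [Pi.neg_apply] at this ⊢
      linarith
    have h2 := hKord t s hs.1 _ _ hle x
    have h3 : (K t s *ᵥ (-(M s *ᵥ z s + F s))) x
        = -((K t s * M s) *ᵥ z s) x - (K t s *ᵥ F s) x := by
      have : K t s *ᵥ (-(M s *ᵥ z s + F s)) = -(K t s *ᵥ (M s *ᵥ z s)) - K t s *ᵥ F s := by
        rw [Matrix.mulVec_neg, Matrix.mulVec_add, neg_add, sub_eq_add_neg]
      rw [this]
      simp [Matrix.mulVec_mulVec]
    have h4 : |(K t s *ᵥ F s) x| ≤ φ s := hKcontr t s hs.1 (F s) (φ s) (hφ s hs) x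
    have h5 : -(K t s *ᵥ F s) x ≥ -φ s := by
      have := (abs_le.mp h4).2
      linarith
    rw [h1]
    rw [h3] at h2
    linarith
  -- integrability of φ
  have hφuIcc : ContinuousOn φ (uIcc t T) := by rwa [uIcc_of_le htT]
  have hφint : IntervalIntegrable φ MeasureTheory.volume t T := hφuIcc.intervalIntegrable
  -- ψ is monotone on Icc t T
  set ψ : ℝ → ℝ := fun s => g s + ∫ u in t..s, φ u with hψ
  have hψcont : ContinuousOn ψ (Icc t T) := by
    apply ContinuousOn.add
    · intro s hs
      exact (hgderiv s hs).continuousAt.continuousWithinAt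
    · have := intervalIntegral.continuousOn_primitive_interval'
        (μ := MeasureTheory.volume) hφint (by rw [uIcc_of_le htT]; exact ⟨le_refl t, htT⟩)
      rwa [uIcc_of_le htT] at this
  have hψmono : MonotoneOn ψ (Icc t T) := by
    apply monotoneOn_of_deriv_nonneg (convex_Icc t T) hψcont
    · intro s hs
      rw [interior_Icc] at hs
      have hs' : s ∈ Icc t T := Ioo_subset_Icc_self hs
      have hd : HasDerivAt ψ (g' s + φ s) s := by
        apply (hgderiv s hs').add
        have hsub : ContinuousOn φ (uIcc t s) :=
          hφcont.mono (by rw [uIcc_of_le hs'.1]; exact Icc_subset_Icc le_rfl hs'.2)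
        apply intervalIntegral.integral_hasDerivAt_right hsub.intervalIntegrable
        · exact ⟨Icc t T, Icc_mem_nhds hs.1 hs.2,
            hφcont.aestronglyMeasurable measurableSet_Icc⟩
        · exact hφcont.continuousAt (Icc_mem_nhds hs.1 hs.2)
      exact hd.differentiableAt.differentiableWithinAt
    · intro s hs
      rw [interior_Icc] at hs
      have hs' : s ∈ Icc t T := Ioo_subset_Icc_self hs
      have hd : HasDerivAt ψ (g' s + φ s) s := by
        apply (hgderiv s hs').add
        have hsub : ContinuousOn φ (uIcc t s) :=
          hφcont.mono (by rw [uIcc_of_le hs'.1]; exact Icc_subset_Icc le_rfl hs'.2)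
        apply intervalIntegral.integral_hasDerivAt_right hsub.intervalIntegrable
        · exact ⟨Icc t T, Icc_mem_nhds hs.1 hs.2,
            hφcont.aestronglyMeasurable measurableSet_Icc⟩
        · exact hφcont.continuousAt (Icc_mem_nhds hs.1 hs.2)
      rw [hd.deriv]
      have := hg'lb s hs'
      linarith
  have hkey : ψ t ≤ ψ T :=
    hψmono ⟨le_refl t, htT⟩ ⟨htT, le_refl T⟩ htT
  have hψt : ψ t = z t x := by
    simp [hψ, hg, hKid t, Matrix.one_apply]
  have hψT : ψ T = (K t T *ᵥ z T) x + ∫ u in t..T, φ u := by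
    simp [hψ, hg, Matrix.mulVec, dotProduct]
  have hKT : (K t T *ᵥ z T) x ≤ ZT :=
    (abs_le.mp (hKcontr t T htT (z T) ZT hZT x)).2
  rw [hψt, hψT] at hkey
  linarith
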